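/- arXiv:1708.05761 — 5 statements merged into one kernel-verified Lean document; each statement's English description precedes it below -/
import Mathlib

section
/- Let R be a Noetherian integral domain with p in its Jacobson radical, and let I, J be ideals. Then (I:J)^{epf} ⊆ (I^{epf} : J). In particular, if I^{epf} = I then (I:J)^{epf} = (I:J). -/
set_option synthInstance.maxHeartbeats 1000000
set_option maxHeartbeats 1000000


/-- The absolute integral closure `R⁺` of a domain `R`: the integral closure of `R`
in a fixed algebraic closure of its fraction field. -/
noncomputable abbrev absIntClosure (R : Type) [CommRing R] [IsDomain R] : Type :=
  ↥(integralClosure R (AlgebraicClosure (FractionRing R)))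

/-- `x` lies in the full extended plus closure `I^{epf}` of the ideal `I`:
there are a nonzero `c ∈ R` and a compatible system `f` of `p`-power roots of `c`
in `R⁺` such that `c^{1/pⁿ} x ∈ (I, p^N) R⁺` for all `n` and all `N > 0`. -/
noncomputable def epf (R : Type) [CommRing R] [IsDomain R] (p : ℕ) (I : Ideal R) : Set R :=
  {x | ∃ c : R, c ≠ 0 ∧ ∃ f : ℕ → absIntClosure R,
    f 0 = algebraMap R (absIntClosure R) c ∧ (∀ n, (f (n + 1)) ^ p = f n) ∧
    ∀ n N : ℕ, 0 < N →
      f n * algebraMap R (absIntClosure R) x ∈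
        Ideal.map (algebraMap R (absIntClosure R)) I ⊔
          Ideal.span {(p : absIntClosure R) ^ N}}


/-- `(I : J)^{epf} ⊆ (I^{epf} : J)`; in particular, if `I` is epf-closed then so is `(I : J)`. -/
theorem epf_colon (R : Type) [CommRing R] [IsDomain R] [IsNoetherianRing R]
    (p : ℕ) (hp : p.Prime) (hpJ : (p : R) ∈ Ideal.jacobson (⊥ : Ideal R))
    (I J : Ideal R) :
    (epf R p (I.colon J) ⊆ {x : R | ∀ j ∈ J, x * j ∈ epf R p I}) ∧
      (epf R p I = (I : Set R) → epf R p (I.colon J) = (I.colon J : Set R)) := by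
  have h1 : epf R p (I.colon J) ⊆ {x : R | ∀ j ∈ J, x * j ∈ epf R p I} := by
    rintro x ⟨c, hc, f, hf0, hfp, hmem⟩ j hj
    refine ⟨c, hc, f, hf0, hfp, ?_⟩
    intro n N hN
    have h := hmem n N hN
    obtain ⟨y, hy, z, hz, hyz⟩ := Submodule.mem_sup.mp h
    have hmul : Ideal.map (algebraMap R (absIntClosure R)) (I.colon J) *
        Ideal.map (algebraMap R (absIntClosure R)) J ≤
        Ideal.map (algebraMap R (absIntClosure R)) I := by
      rw [← Ideal.map_mul]
      apply Ideal.map_mono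
      rw [Ideal.mul_le]
      intro r hr s hs
      simpa [smul_eq_mul] using Submodule.mem_colon.mp hr s hs
    rw [map_mul, ← mul_assoc, ← hyz, add_mul]
    refine Submodule.add_mem _ ?_ ?_
    · exact Ideal.mem_sup_left (hmul (Ideal.mul_mem_mul hy (Ideal.mem_map_of_mem _ hj)))
    · exact Ideal.mem_sup_right (Ideal.mul_mem_right _ _ hz)
  refine ⟨h1, fun hI => ?_⟩
  apply Set.Subset.antisymm
  · intro x hx
    rw [SetLike.mem_coe, Submodule.mem_colon]
    intro j hj
    have := h1 hx j hj
    rw [hI] at this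
    simpa [smul_eq_mul] using this
  · intro x hx
    refine ⟨1, one_ne_zero, fun _ => 1, by simp, by simp, fun n N hN => ?_⟩
    rw [one_mul]
    exact Ideal.mem_sup_left (Ideal.mem_map_of_mem _ hx)
end

section
/- Let R be an integral domain of mixed characteristic p, I an ideal of R, and x ∈ R. Let R^{++} denote the p-adic completion of R^+. If c^{1/p^n} x ∈ (I, p^N)R^{++} for all n, N > 0 (for some fixed nonzero c), then c^{1/p^n} x ∈ (I, p^N)R^+ for all n, N > 0; consequently x ∈ I^{epf}. -/
set_option synthInstance.maxHeartbeats 1000000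
set_option maxHeartbeats 1000000

/-- `R^{++}`: the `p`-adic completion of the absolute integral closure `R⁺`. -/
noncomputable abbrev absIntClosureCompletion (R : Type) [CommRing R] [IsDomain R] (p : ℕ) : Type :=
  AdicCompletion (Ideal.span {(p : absIntClosure R)}) (absIntClosure R)

/-- The natural ring map `R → R^{++}`. -/
noncomputable def toRpp (R : Type) [CommRing R] [IsDomain R] (p : ℕ) :
    R →+* absIntClosureCompletion R p :=
  (algebraMap (absIntClosure R) (absIntClosureCompletion R p)).comp
    (algebraMap R (absIntClosure R))


private lemma epf_key {A : Type*} [CommRing A] (P J : Ideal A) (N : ℕ) (hPJ : P ^ N ≤ J) (a : A)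
    (h : algebraMap A (AdicCompletion P A) a ∈
      Ideal.map ((algebraMap A (AdicCompletion P A))) J) :
    a ∈ J := by
  set e := AdicCompletion.evalₐ P N
  have he : e (algebraMap A (AdicCompletion P A) a)
      ∈ Ideal.map (Ideal.Quotient.mk (P ^ N)) J := by
    have := Ideal.mem_map_of_mem (e : AdicCompletion P A →+* A ⧸ P ^ N) h
    rw [Ideal.map_map] at this
    convert this using 2
    · ext y; exact (e.commutes y).symm
    · rfl
  rw [AlgHom.commutes] at he
  rwa [← Ideal.mem_quotient_iff_mem hPJ]

/-- If `c^{1/pⁿ} x ∈ (I, p^N) R^{++}` for all `n, N > 0`, then already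
`c^{1/pⁿ} x ∈ (I, p^N) R⁺` for all `n, N > 0`; consequently `x ∈ I^{epf}`. -/
theorem mem_epf_of_mem_completion (R : Type) [CommRing R] [IsDomain R]
    (p : ℕ) (hp : p.Prime) (hp0 : (p : R) ≠ 0) (hpJ : (p : R) ∈ Ideal.jacobson (⊥ : Ideal R))
    (I : Ideal R) (x c : R) (hc : c ≠ 0) (f : ℕ → absIntClosure R)
    (hf0 : f 0 = algebraMap R (absIntClosure R) c)
    (hfp : ∀ n, (f (n + 1)) ^ p = f n)
    (h : ∀ n N : ℕ, 0 < N →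
      algebraMap (absIntClosure R) (absIntClosureCompletion R p)
          (f n * algebraMap R (absIntClosure R) x) ∈
        Ideal.map (toRpp R p) I ⊔ Ideal.span {(p : absIntClosureCompletion R p) ^ N}) :
    (∀ n N : ℕ, 0 < N →
      f n * algebraMap R (absIntClosure R) x ∈
        Ideal.map (algebraMap R (absIntClosure R)) I ⊔
          Ideal.span {(p : absIntClosure R) ^ N}) ∧
      x ∈ epf R p I := by
  have main : ∀ n N : ℕ, 0 < N →
      f n * algebraMap R (absIntClosure R) x ∈
        Ideal.map (algebraMap R (absIntClosure R)) I ⊔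
          Ideal.span {(p : absIntClosure R) ^ N} := by
    intro n N hN
    set A := absIntClosure R
    set P : Ideal A := Ideal.span {(p : A)}
    refine epf_key P _ N ?_ _ ?_
    · rw [Ideal.span_singleton_pow]; exact le_sup_right
    · have hmap : Ideal.map (algebraMap A (AdicCompletion P A))
          (Ideal.map (algebraMap R A) I ⊔ Ideal.span {(p : A) ^ N}) =
          Ideal.map (toRpp R p) I ⊔
            Ideal.span {(p : absIntClosureCompletion R p) ^ N} := by
        rw [Ideal.map_sup, Ideal.map_map, Ideal.map_span, Set.image_singleton,
          map_pow, map_natCast]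
        rfl
      rw [hmap]
      exact h n N hN
  exact ⟨main, c, hc, f, hf0, hfp, main⟩
end

section
/- Let T be a ring that is p-adically complete (for a prime p). If T/pT is Noetherian, then T is Noetherian. -/
open Ideal

/-- Cohen's theorem: a commutative ring all of whose prime ideals are
finitely generated is Noetherian. -/
theorem isNoetherianRing_of_prime_fg {R : Type*} [CommRing R]
    (H : ∀ P : Ideal R, P.IsPrime → P.FG) : IsNoetherianRing R := by
  rw [isNoetherianRing_iff_ideal_fg]
  by_contra hR
  push_neg at hR
  obtain ⟨I₀, hI₀⟩ := hR
  -- Zorn's lemma on non-finitely-generated ideals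
  obtain ⟨M, -, hM⟩ := zorn_le_nonempty₀ {I : Ideal R | ¬ I.FG} (fun c hc hchain y hy => by
    refine ⟨sSup c, ?_, fun z hz => le_sSup hz⟩
    intro hfg
    obtain ⟨s, hs⟩ := hfg
    have hsub : ∀ x ∈ s, ∃ J ∈ c, x ∈ J := by
      intro x hx
      have : x ∈ sSup c := hs ▸ subset_span hx
      exact (Submodule.mem_sSup_of_directed ⟨y, hy⟩ hchain.directedOn).1 this
    have key : ∀ t : Finset R, (∀ x ∈ t, ∃ J ∈ c, x ∈ J) → ∃ J ∈ c, (↑t : Set R) ⊆ J := by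
      classical
      intro t
      induction t using Finset.induction_on with
      | empty => exact fun _ => ⟨y, hy, by simp⟩
      | @insert g t hgt ih =>
        intro ht
        obtain ⟨J, hJ, hJ'⟩ := ih (fun x hx => ht x (Finset.mem_insert_of_mem hx))
        obtain ⟨K, hK, hK'⟩ := ht g (Finset.mem_insert_self _ _)
        obtain ⟨L, hL, hKL, hJL⟩ := hchain.directedOn K hK J hJ
        exact ⟨L, hL, by
          intro x hx
          rcases Finset.mem_insert.1 hx with rfl | hx
          · exact hKL hK'
          · exact hJL (hJ' hx)⟩
    obtain ⟨J, hJc, hJ⟩ := key s hsub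
    have : sSup c ≤ J := hs ▸ Ideal.span_le.2 hJ
    have hJeq : J = sSup c := le_antisymm (le_sSup hJc) this
    exact hc hJc (hJeq ▸ ⟨s, hs⟩)) I₀ hI₀
  -- M is a maximal non-finitely-generated ideal; show it is prime
  have hMfg : ¬ M.FG := hM.prop
  have hfg_of_gt : ∀ J : Ideal R, M < J → J.FG := by
    intro J hJ
    by_contra hJfg
    exact hJ.ne (le_antisymm hJ.le (hM.le_of_ge hJfg hJ.le))
  have hMne : M ≠ ⊤ := by
    rintro rfl
    exact hMfg ⟨{1}, by simp⟩
  have hMprime : M.IsPrime := by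
    refine ⟨hMne, fun {a b} hab => ?_⟩
    by_contra hor
    push_neg at hor
    obtain ⟨ha, hb⟩ := hor
    classical
    -- M ⊔ (a) is finitely generated
    have hMa : (M ⊔ Ideal.span {a}).FG := by
      refine hfg_of_gt _ (lt_of_le_of_ne le_sup_left ?_)
      intro he
      have haM : a ∈ M ⊔ Ideal.span {a} := Ideal.mem_sup_right (Ideal.mem_span_singleton_self a)
      rw [← he] at haM
      exact ha haM
    -- the colon ideal (M : a) is finitely generated
    set K := M.colon (Ideal.span {a}) with hK
    have hMK : M ≤ K := fun x hx => Submodule.mem_colon.2 fun y hy => Ideal.mul_mem_right _ _ hx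
    have hbK : b ∈ K := Ideal.mem_colon_span_singleton.2 (by rwa [mul_comm])
    have hKfg : K.FG := hfg_of_gt _ (lt_of_le_of_ne hMK (fun he => hb (he ▸ hbK)))
    -- decompose the generators of M ⊔ (a)
    obtain ⟨s, hs⟩ := hMa
    have hdec : ∀ g : R, ∃ mg cg : R, g ∈ (s : Set R) → (mg ∈ M ∧ g = mg + cg * a) := by
      intro g
      by_cases hg : g ∈ (s : Set R)
      · have : g ∈ M ⊔ Ideal.span {a} := hs ▸ subset_span hg
        obtain ⟨m, hm, z, hz, hmz⟩ := Submodule.mem_sup.1 this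
        obtain ⟨c, hc⟩ := Ideal.mem_span_singleton'.1 hz
        exact ⟨m, c, fun _ => ⟨hm, by rw [← hmz, hc]⟩⟩
      · exact ⟨0, 0, fun hg' => absurd hg' hg⟩
    choose mf cf hmf using hdec
    -- M = span (mf '' s) ⊔ (a) * K, hence finitely generated
    have hMeq : M = Ideal.span (mf '' s) ⊔ Ideal.span {a} * K := by
      apply le_antisymm
      · intro x hx
        have hx' : x ∈ Ideal.span (s : Set R) := hs.symm ▸ Submodule.mem_sup_left hx
        obtain ⟨f, -, hf⟩ := Submodule.mem_span_finset.1 hx'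
        have hxeq : x = (∑ i ∈ s, f i * mf i) + (∑ i ∈ s, f i * cf i) * a := by
          rw [← hf, Finset.sum_mul, ← Finset.sum_add_distrib]
          refine Finset.sum_congr rfl fun i hi => ?_
          rw [smul_eq_mul]
          calc f i * i = f i * (mf i + cf i * a) := by rw [← (hmf i hi).2]
            _ = f i * mf i + f i * cf i * a := by ring
        have hu : (∑ i ∈ s, f i * mf i) ∈ Ideal.span (mf '' s) := by
          refine Ideal.sum_mem _ fun i hi => Ideal.mul_mem_left _ _ ?_
          exact subset_span ⟨i, hi, rfl⟩
        have huM : (∑ i ∈ s, f i * mf i) ∈ M := by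
          refine Ideal.sum_mem _ fun i hi => Ideal.mul_mem_left _ _ (hmf i hi).1
        have hwK : (∑ i ∈ s, f i * cf i) ∈ K := by
          rw [Ideal.mem_colon_span_singleton]
          have : (∑ i ∈ s, f i * cf i) * a = x - (∑ i ∈ s, f i * mf i) := by
            rw [hxeq]; ring
          rw [this]
          exact Submodule.sub_mem _ hx huM
        rw [hxeq]
        refine Submodule.add_mem _ (Submodule.mem_sup_left hu) (Submodule.mem_sup_right ?_)
        rw [mul_comm _ a]
        exact Ideal.mul_mem_mul (Ideal.mem_span_singleton_self a) hwK
      · refine sup_le (Ideal.span_le.2 ?_) (Ideal.mul_le.2 fun x hx y hy => ?_)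
        · rintro _ ⟨i, hi, rfl⟩
          exact (hmf i hi).1
        · obtain ⟨c, hc⟩ := Ideal.mem_span_singleton'.1 hx
          have := Ideal.mem_colon_span_singleton.1 hy
          rw [← hc]
          have : c * a * y = c * (y * a) := by ring
          rw [this]
          exact Ideal.mul_mem_left _ _ (Ideal.mem_colon_span_singleton.1 hy)
    exact hMfg (hMeq ▸ Submodule.FG.sup (Submodule.fg_span (s.finite_toSet.image mf))
      ((Submodule.fg_span_singleton a).mul hKfg))
  exact hMfg (H M hMprime)

/-- Every `R`-submodule of `R ⧸ I` is finitely generated when `R ⧸ I` is Noetherian. -/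
theorem fg_of_submodule_quotient {R : Type*} [CommRing R] (I : Ideal R)
    (h : IsNoetherianRing (R ⧸ I)) (N : Submodule R (R ⧸ I)) : N.FG := by
  have : IsNoetherian (R ⧸ I) (R ⧸ I) := h
  set N' : Submodule (R ⧸ I) (R ⧸ I) :=
    { carrier := N
      add_mem' := fun ha hb => N.add_mem ha hb
      zero_mem' := N.zero_mem
      smul_mem' := by
        intro c n hn
        obtain ⟨c', rfl⟩ := Ideal.Quotient.mk_surjective c
        have : (Ideal.Quotient.mk I c') • n = c' • n := by
          rw [← Ideal.Quotient.algebraMap_eq, algebraMap_smul]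
        rw [smul_eq_mul, ← smul_eq_mul, this]
        exact N.smul_mem c' hn } with hN'
  obtain ⟨s, hs⟩ := IsNoetherian.noetherian N'
  refine ⟨s, ?_⟩
  have hsur : Function.Surjective (algebraMap R (R ⧸ I)) := by
    rw [Ideal.Quotient.algebraMap_eq]
    exact Ideal.Quotient.mk_surjective
  have := Submodule.restrictScalars_span R (R ⧸ I) hsur (s : Set (R ⧸ I))
  rw [← this, hs]
  rfl

/-- A `p`-adically complete ring whose reduction mod `p` is Noetherian is Noetherian. -/
theorem isNoetherianRing_of_pAdicComplete (T : Type) [CommRing T] (p : ℕ) (hp : p.Prime)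
    [IsAdicComplete (Ideal.span {(p : T)}) T]
    (h : IsNoetherianRing (T ⧸ Ideal.span {(p : T)})) :
    IsNoetherianRing T := by
  classical
  set I : Ideal T := Ideal.span {(p : T)} with hI
  have hsm : ∀ n : ℕ, (I ^ n • ⊤ : Submodule T T) = I ^ n := fun n => by
    rw [smul_eq_mul, Ideal.mul_top]
  refine isNoetherianRing_of_prime_fg fun P hP => ?_
  by_cases hpP : (p : T) ∈ P
  · -- primes containing p: pull back from the Noetherian quotient
    have hIP : I ≤ P := (Ideal.span_singleton_le_iff_mem P).2 hpP
    refine Submodule.fg_of_fg_map_of_fg_inf_ker I.mkQ ?_ ?_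
    · exact fg_of_submodule_quotient I h _
    · rw [Submodule.ker_mkQ, inf_of_le_right hIP]
      exact ⟨{(p : T)}, by simp [hI]⟩
  · -- primes not containing p: approximation argument
    obtain ⟨s, hs⟩ : (Submodule.map I.mkQ P).FG := fg_of_submodule_quotient I h _
    have hlift : ∀ y : T ⧸ I, ∃ z : T, y ∈ (s : Set (T ⧸ I)) → (z ∈ P ∧ I.mkQ z = y) := by
      intro y
      by_cases hy : y ∈ (s : Set (T ⧸ I))
      · have hy' : y ∈ Submodule.map I.mkQ P := by rw [← hs]; exact Submodule.subset_span hy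
        rw [Submodule.mem_map] at hy'
        obtain ⟨z, hz, hz'⟩ := hy'
        exact ⟨z, fun _ => ⟨hz, hz'⟩⟩
      · exact ⟨0, fun hy' => absurd hy' hy⟩
    choose l hl using hlift
    set ι := {y : T ⧸ I // y ∈ s} with hι
    set x : ι → T := fun y => l y.1 with hx
    have hxP : ∀ i : ι, x i ∈ P := fun i => (hl i.1 i.2).1
    have hspanle : Ideal.span (Set.range x) ≤ P := by
      rw [Ideal.span_le]
      rintro _ ⟨i, rfl⟩
      exact hxP i
    -- the one-step approximation
    have hstep : ∀ q : T, ∃ (a : ι → T) (t : T), q ∈ P →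
        (t ∈ P ∧ q = (∑ i, a i * x i) + t * (p : T)) := by
      intro q
      by_cases hq : q ∈ P
      swap
      · exact ⟨0, 0, fun hq' => absurd hq' hq⟩
      have h1 : I.mkQ q ∈ Submodule.map I.mkQ (Submodule.span T (Set.range x)) := by
        rw [Submodule.map_span, ← Set.range_comp]
        have h2 : (I.mkQ ∘ x) = fun i : ι => (i.1 : T ⧸ I) := by
          funext i
          exact (hl i.1 i.2).2
        rw [h2]
        have h3 : Set.range (fun i : ι => (i.1 : T ⧸ I)) = (s : Set (T ⧸ I)) :=
          Subtype.range_coe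
        rw [h3, hs]
        exact Submodule.mem_map_of_mem hq
      obtain ⟨g, hg, hgq⟩ := h1
      have hker : q - g ∈ I := by
        rw [← Submodule.ker_mkQ I, LinearMap.mem_ker, map_sub, hgq, sub_self]
      obtain ⟨c, hc⟩ := Ideal.mem_span_singleton'.1 hker
      have hcP : c ∈ P := by
        have : c * (p : T) ∈ P := hc ▸ Submodule.sub_mem _ hq (hspanle hg)
        exact (hP.mem_or_mem this).resolve_right hpP
      obtain ⟨a, ha⟩ := (Submodule.mem_span_range_iff_exists_fun T).1 hg
      refine ⟨a, c, fun _ => ⟨hcP, ?_⟩⟩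
      have : q = g + c * (p : T) := by rw [hc]; ring
      rw [this, ← ha]
      simp [smul_eq_mul]
    choose af tf hstep' using hstep
    -- fix q ∈ P and build the approximating sequences
    have key : ∀ q ∈ P, q ∈ Ideal.span (Set.range x) := by
      intro q hq
      set t : ℕ → T := fun n => Nat.rec q (fun _ r => tf r) n with ht
      have ht0 : t 0 = q := rfl
      have htsucc : ∀ n, t (n + 1) = tf (t n) := fun n => rfl
      have htP : ∀ n, t n ∈ P := by
        intro n
        induction n with
        | zero => exact hq
        | succ n ih => rw [htsucc]; exact (hstep' (t n) ih).1
      have htrec : ∀ n, t n = (∑ i, af (t n) i * x i) + t (n + 1) * (p : T) := by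
        intro n
        rw [htsucc]
        exact (hstep' (t n) (htP n)).2
      set coeff : ℕ → ι → T := fun N i => ∑ n ∈ Finset.range N, (p : T) ^ n * af (t n) i
        with hcoeff
      -- partial sum identity
      have hpartial : ∀ N, q = (∑ i, coeff N i * x i) + (p : T) ^ N * t N := by
        intro N
        induction N with
        | zero => simp [hcoeff, ht0]
        | succ N ih =>
          rw [ih, htrec N]
          have : ∀ i : ι, coeff (N + 1) i = coeff N i + (p : T) ^ N * af (t N) i := by
            intro i
            rw [hcoeff]
            exact Finset.sum_range_succ _ N
          simp only [this]
          have hsplit : (∑ i, (coeff N i + (p : T) ^ N * af (t N) i) * x i)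
              = (∑ i, coeff N i * x i) + (p : T) ^ N * ∑ i, af (t N) i * x i := by
            rw [Finset.mul_sum, ← Finset.sum_add_distrib]
            exact Finset.sum_congr rfl fun i _ => by ring
          rw [hsplit]
          ring
      -- the coefficient sequences are Cauchy
      have hcauchy : ∀ i : ι, ∀ {m n : ℕ}, m ≤ n →
          coeff m i ≡ coeff n i [SMOD (I ^ m • ⊤ : Submodule T T)] := by
        intro i m n hmn
        rw [SModEq.sub_mem, hsm]
        have hdiff : coeff n i - coeff m i = ∑ k ∈ Finset.Ico m n, (p : T) ^ k * af (t k) i :=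
          (Finset.sum_Ico_eq_sub _ hmn).symm
        have hmem : coeff n i - coeff m i ∈ I ^ m := by
          rw [hdiff]
          refine Submodule.sum_mem _ fun k hk => ?_
          rw [hI, Ideal.span_singleton_pow]
          refine Ideal.mem_span_singleton'.2 ⟨(p : T) ^ (k - m) * af (t k) i, ?_⟩
          have hkm : m ≤ k := (Finset.mem_Ico.1 hk).1
          rw [mul_comm, ← mul_assoc, ← pow_add, Nat.add_sub_cancel' hkm]
        simpa using (neg_mem hmem : -(coeff n i - coeff m i) ∈ I ^ m)
      -- take limits coefficientwise using completeness
      have hlim : ∀ i : ι, ∃ b : T, ∀ n, coeff n i ≡ b [SMOD (I ^ n • ⊤ : Submodule T T)] :=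
        fun i => IsPrecomplete.prec inferInstance (fun {m n} hmn => hcauchy i hmn)
      choose b hb using hlim
      have hqL : q = ∑ i, b i * x i := by
        rw [← sub_eq_zero]
        refine IsHausdorff.haus (inferInstance : IsHausdorff I T) _ fun N => ?_
        rw [SModEq.zero, hsm]
        have hq1 : q - (∑ i, b i * x i)
            = (∑ i, (coeff N i - b i) * x i) + (p : T) ^ N * t N := by
          rw [hpartial N]
          have hsplit : (∑ i, (coeff N i - b i) * x i)
              = (∑ i, coeff N i * x i) - ∑ i, b i * x i := by
            rw [← Finset.sum_sub_distrib]
            exact Finset.sum_congr rfl fun i _ => by ring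
          rw [hsplit]
          ring
        rw [hq1]
        refine Submodule.add_mem _ (Submodule.sum_mem _ fun i _ => ?_) ?_
        · have := (SModEq.sub_mem).1 (hb i N)
          rw [hsm] at this
          exact Ideal.mul_mem_right _ _ this
        · rw [hI, Ideal.span_singleton_pow]
          exact Ideal.mem_span_singleton'.2 ⟨t N, mul_comm _ _⟩
      rw [hqL]
      exact Submodule.sum_mem _ fun i _ =>
        Ideal.mul_mem_left _ _ (Submodule.subset_span ⟨i, rfl⟩)
    have : P = Ideal.span (Set.range x) := le_antisymm key hspanle
    rw [this]
    exact Submodule.fg_span (Set.finite_range x)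
end

section
/- With T, f, I, M as above (I finitely generated containing a power of f, f a nonzerodivisor on M): f is also a nonzerodivisor on the f-adic completion M̂ of M. -/
/-- Let `T` be a commutative ring, `I = (f₁, …, fₙ)` a finitely generated ideal containing a
power of `f`, and `M` a `T`-module on which `f` is a nonzerodivisor. Then `f` is a
nonzerodivisor on the `f`-adic completion `M̂` of `M`. -/
theorem smul_nonZeroDivisor_adicCompletion (T : Type) [CommRing T] (f : T)
    (n : ℕ) (fs : Fin n → T) (I : Ideal T) (hI : I = Ideal.span (Set.range fs))
    (hfI : ∃ m : ℕ, f ^ m ∈ I)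
    (M : Type) [AddCommGroup M] [Module T M]
    (hf : ∀ x : M, f • x = 0 → x = 0) :
    ∀ x : AdicCompletion (Ideal.span {f}) M, f • x = 0 → x = 0 := by
  intro x hx
  ext k
  rw [AdicCompletion.val_zero]
  -- use the compatibility at level k+1
  rw [← x.property (Nat.le_succ k)]
  -- pick a representative m of x.val (k+1)
  obtain ⟨m, hm⟩ := Submodule.mkQ_surjective _ (x.val (k + 1))
  -- f • m lies in (span {f})^(k+1) • ⊤
  have hfm : f • m ∈ ((Ideal.span {f}) ^ (k + 1) • ⊤ : Submodule T M) := by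
    rw [← Submodule.Quotient.mk_eq_zero, ← Submodule.mkQ_apply, map_smul, hm,
      ← AdicCompletion.val_smul_apply, hx, AdicCompletion.val_zero, Pi.zero_apply]
  rw [Ideal.span_singleton_pow, Submodule.ideal_span_singleton_smul] at hfm
  obtain ⟨m', -, hm'⟩ := Set.mem_smul_set.mp hfm
  -- deduce m = f^k • m'
  have hmeq : m = f ^ k • m' := by
    have : f • (m - f ^ k • m') = 0 := by
      rw [smul_sub, smul_smul, ← pow_succ', hm', sub_self]
    have := hf _ this
    rwa [sub_eq_zero] at this
  have hmmem : m ∈ ((Ideal.span {f}) ^ k • ⊤ : Submodule T M) := by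
    rw [Ideal.span_singleton_pow, Submodule.ideal_span_singleton_smul, hmeq]
    exact Submodule.smul_mem_pointwise_smul m' (f ^ k) ⊤ Submodule.mem_top
  rw [← hm]
  show Submodule.mkQ _ m = 0
  rwa [Submodule.mkQ_apply, Submodule.Quotient.mk_eq_zero]
end

section
/- Let R be an integral domain of mixed characteristic p and S an integral extension of R contained in R^+ (e.g. S = a module-finite extension domain). If an element v ∈ R^{++} (the p-adic completion of R^+) satisfies (v_1, g^d, p^{m})^{k+1} R^{++} = (v_1, g^d, p^{m})^k (g^d, p^m) R^{++} for some k, where v_1 ∈ R^+, and both ideals contain a power of p, then the same determinantal equality holds over R^+; consequently v_1 is integral over (g^d, p^m)R^+. -/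
set_option synthInstance.maxHeartbeats 1000000
set_option maxHeartbeats 1000000

/-- `z` is integral over the ideal `J`: it satisfies an equation
`z^m + a₁ z^{m-1} + ⋯ + a_m = 0` with `aᵢ ∈ Jⁱ`. -/
def isIntegralOverIdeal (A : Type) [CommRing A] (J : Ideal A) (z : A) : Prop :=
  ∃ m : ℕ, 0 < m ∧ ∃ a : ℕ → A, (∀ i, 1 ≤ i → i ≤ m → a i ∈ J ^ i) ∧
    z ^ m + ∑ i ∈ Finset.Icc 1 m, a i * z ^ (m - i) = 0

/-- Auxiliary: descent of ideal membership along the map to the adic completion, for ideals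
containing a power of the element we complete at. -/
theorem aux_adic_descent {A : Type} [CommRing A] (a : A) (K L : Ideal A) (n : ℕ)
    (hn : (Ideal.span {a}) ^ n ≤ K)
    (h : Ideal.map (algebraMap A (AdicCompletion (Ideal.span {a}) A)) L ≤
      Ideal.map (algebraMap A (AdicCompletion (Ideal.span {a}) A)) K) : L ≤ K := by
  intro x hx
  have hfx : algebraMap A (AdicCompletion (Ideal.span {a}) A) x ∈
      Ideal.map (algebraMap A (AdicCompletion (Ideal.span {a}) A)) K :=
    h (Ideal.mem_map_of_mem _ hx)
  have e := AdicCompletion.evalₐ (R := A) (Ideal.span {a}) n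
  have hcomp : (e : AdicCompletion (Ideal.span {a}) A →+* A ⧸ (Ideal.span {a}) ^ n).comp
      (algebraMap A (AdicCompletion (Ideal.span {a}) A)) = algebraMap A _ :=
    e.comp_algebraMap
  have h1 : e (algebraMap A (AdicCompletion (Ideal.span {a}) A) x) ∈
      Ideal.map (e : AdicCompletion (Ideal.span {a}) A →+* A ⧸ (Ideal.span {a}) ^ n)
        (Ideal.map (algebraMap A (AdicCompletion (Ideal.span {a}) A)) K) :=
    Ideal.mem_map_of_mem _ hfx
  rw [Ideal.map_map, hcomp] at h1
  have h2 : e (algebraMap A (AdicCompletion (Ideal.span {a}) A) x) =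
      Ideal.Quotient.mk ((Ideal.span {a}) ^ n) x := by
    have h3 := congrArg (fun f : A →+* A ⧸ (Ideal.span {a}) ^ n => f x) hcomp
    simpa [Ideal.Quotient.algebraMap_eq] using h3
  rw [h2, Ideal.Quotient.algebraMap_eq] at h1
  rw [Ideal.mem_quotient_iff_mem_sup] at h1
  exact (sup_eq_left.mpr hn) ▸ h1

/-- Auxiliary: the determinantal trick.  If `I = J + (v)`, `I^(k+1) = I^k * J`, and `I^k`
contains a nonzero element of the domain `A`, then `v` is integral over `J`. -/
theorem aux_det_trick {A : Type} [CommRing A] [IsDomain A] (I J : Ideal A) (v z : A) (k : ℕ)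
    (hv : v ∈ I) (hJI : J ≤ I) (hIfg : I.FG) (hz : z ∈ I ^ k) (hz0 : z ≠ 0)
    (heq : I ^ (k + 1) = I ^ k * J) : isIntegralOverIdeal A J v := by
  set N : Ideal A := I ^ k with hN
  have hNfg : N.FG := Submodule.FG.pow hIfg k
  have hmapmem : ∀ x ∈ N, (LinearMap.mul A A v) x ∈ N := by
    intro x hx
    have h1 : v * x ∈ I ^ (k + 1) := by
      rw [pow_succ, mul_comm v x]
      exact Ideal.mul_mem_mul hx hv
    exact Ideal.pow_le_pow_right (Nat.le_succ k) h1
  set φ : N →ₗ[A] N := (LinearMap.mul A A v).restrict hmapmem with hφ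
  have hφ_apply : ∀ x : N, ((φ x : N) : A) = v * (x : A) := by
    intro x
    rw [hφ, LinearMap.restrict_apply]
    exact LinearMap.mul_apply' v (x : A)
  have hrange : LinearMap.range φ ≤ J • (⊤ : Submodule A N) := by
    rintro _ ⟨x, rfl⟩
    rw [Submodule.mem_smul_top_iff, Ideal.smul_eq_mul]
    have h1 : v * (x : A) ∈ I ^ (k + 1) := by
      rw [pow_succ, mul_comm v (x : A)]
      exact Ideal.mul_mem_mul x.2 hv
    rw [heq, mul_comm] at h1
    rw [hφ_apply]
    exact h1
  haveI : Module.Finite A N := Module.Finite.iff_fg.mpr hNfg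
  obtain ⟨P, hmonic, -, hcoeff, haeval⟩ :=
    LinearMap.exists_monic_and_coeff_mem_pow_and_aeval_eq_zero_of_range_le_smul A φ J hrange
  set zz : N := ⟨z, hz⟩ with hzz
  have hφpow : ∀ (i : ℕ) (x : N), (((φ ^ i) x : N) : A) = v ^ i * (x : A) := by
    intro i
    induction i with
    | zero => intro x; simp
    | succ i ih =>
      intro x
      rw [pow_succ, Module.End.mul_apply, ih, hφ_apply, pow_succ]
      ring
  have heval : ∀ q : Polynomial A, (((Polynomial.aeval φ q) zz : N) : A) =
      Polynomial.eval v q * z := by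
    intro q
    induction q using Polynomial.induction_on' with
    | add q r hq hr =>
      rw [map_add, Polynomial.eval_add, LinearMap.add_apply, Submodule.coe_add, hq, hr]
      ring
    | monomial i c =>
      rw [Polynomial.aeval_monomial, Polynomial.eval_monomial]
      rw [Module.End.mul_apply, Module.algebraMap_end_apply, SetLike.val_smul, smul_eq_mul,
        hφpow]
      ring
  have hPeval : Polynomial.eval v P = 0 := by
    have h0 : (((Polynomial.aeval φ P) zz : N) : A) = 0 := by rw [haeval]; rfl
    rw [heval] at h0
    rcases mul_eq_zero.mp h0 with h | h
    · exact h
    · exact absurd h hz0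
  set n : ℕ := P.natDegree with hn
  have hnpos : 0 < n := by
    by_contra h
    push_neg at h
    have h1 : P = 1 := (Polynomial.Monic.natDegree_eq_zero hmonic).mp (Nat.le_zero.mp h)
    rw [h1, Polynomial.eval_one] at hPeval
    exact one_ne_zero hPeval
  refine ⟨n, hnpos, fun i => P.coeff (n - i), ?_, ?_⟩
  · intro i hi1 hin
    have h1 := hcoeff (n - i)
    rwa [Nat.sub_sub_self hin] at h1
  · have hev : Polynomial.eval v P =
        v ^ n + ∑ j ∈ Finset.range n, P.coeff j * v ^ j := by
      rw [Polynomial.eval_eq_sum_range, Finset.sum_range_succ, hmonic.coeff_natDegree, one_mul,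
        add_comm]
    have hsum : ∑ i ∈ Finset.Icc 1 n, P.coeff (n - i) * v ^ (n - i) =
        ∑ j ∈ Finset.range n, P.coeff j * v ^ j := by
      apply Finset.sum_bij' (fun i _ => n - i) (fun j _ => n - j)
      · intro a ha
        simp only [Finset.mem_Icc] at ha
        simp only [Finset.mem_range]
        omega
      · intro a ha
        simp only [Finset.mem_range] at ha
        simp only [Finset.mem_Icc]
        omega
      · intro a ha
        simp only [Finset.mem_Icc] at ha
        omega
      · intro a ha
        simp only [Finset.mem_range] at ha
        omega
      · intro a ha
        rfl
    rw [hsum, ← hev]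
    exact hPeval

/-- Auxiliary: `p ≠ 0` in the absolute integral closure. -/
theorem aux_p_ne_zero (R : Type) [CommRing R] [IsDomain R] (p : ℕ) (hp0 : (p : R) ≠ 0) :
    (p : absIntClosure R) ≠ 0 := by
  have h1 : (p : FractionRing R) ≠ 0 := by
    rw [← map_natCast (algebraMap R (FractionRing R))]
    intro h
    exact hp0 (IsFractionRing.injective R (FractionRing R) (by rw [h, map_zero]))
  have h2 : (p : AlgebraicClosure (FractionRing R)) ≠ 0 := by
    rw [← map_natCast (algebraMap (FractionRing R) (AlgebraicClosure (FractionRing R)))]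
    intro h
    exact h1 ((algebraMap (FractionRing R) (AlgebraicClosure (FractionRing R))).injective
      (by rw [h, map_zero]))
  intro h
  apply h2
  have h3 := congrArg (Subalgebra.val (integralClosure R (AlgebraicClosure (FractionRing R)))) h
  simpa using h3

/-- Descent of the determinantal equality from `R^{++}` to `R⁺`: if
`(v₁, g^d, p^m)^{k+1} R^{++} = (v₁, g^d, p^m)^k (g^d, p^m) R^{++}` (both ideals containing a
power of `p`), then the same equality holds over `R⁺`, and consequently `v₁` is integral over
`(g^d, p^m) R⁺`. -/
theorem determinantal_descent (R : Type) [CommRing R] [IsDomain R]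
    (p : ℕ) (hp : p.Prime) (hp0 : (p : R) ≠ 0) (hpJ : (p : R) ∈ Ideal.jacobson (⊥ : Ideal R))
    (g : R) (d m k : ℕ) (v₁ : absIntClosure R)
    (hyp : (Ideal.map (algebraMap (absIntClosure R) (absIntClosureCompletion R p))
          (Ideal.span {v₁, algebraMap R (absIntClosure R) g ^ d, (p : absIntClosure R) ^ m}))
            ^ (k + 1) =
        (Ideal.map (algebraMap (absIntClosure R) (absIntClosureCompletion R p))
          (Ideal.span {v₁, algebraMap R (absIntClosure R) g ^ d, (p : absIntClosure R) ^ m})) ^ k *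
          Ideal.map (algebraMap (absIntClosure R) (absIntClosureCompletion R p))
            (Ideal.span {algebraMap R (absIntClosure R) g ^ d, (p : absIntClosure R) ^ m})) :
    (Ideal.span {v₁, algebraMap R (absIntClosure R) g ^ d, (p : absIntClosure R) ^ m}) ^ (k + 1) =
      (Ideal.span {v₁, algebraMap R (absIntClosure R) g ^ d, (p : absIntClosure R) ^ m}) ^ k *
        Ideal.span {algebraMap R (absIntClosure R) g ^ d, (p : absIntClosure R) ^ m} ∧
      isIntegralOverIdeal (absIntClosure R)
        (Ideal.span {algebraMap R (absIntClosure R) g ^ d, (p : absIntClosure R) ^ m}) v₁ := by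
  set gd : absIntClosure R := algebraMap R (absIntClosure R) g ^ d with hgd
  set pm : absIntClosure R := (p : absIntClosure R) ^ m with hpm
  set I : Ideal (absIntClosure R) := Ideal.span {v₁, gd, pm} with hI
  set J : Ideal (absIntClosure R) := Ideal.span {gd, pm} with hJdef
  have hpA : (p : absIntClosure R) ≠ 0 := aux_p_ne_zero R p hp0
  have hvI : v₁ ∈ I := Ideal.subset_span (by simp)
  have hpmJ : pm ∈ J := Ideal.subset_span (by simp)
  have hJI : J ≤ I := Ideal.span_mono (Set.subset_insert _ _)
  have part1 : I ^ (k + 1) = I ^ k * J := by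
    apply le_antisymm
    · apply aux_adic_descent (p : absIntClosure R) (I ^ k * J) (I ^ (k + 1)) (m * (k + 1))
      · rw [Ideal.span_singleton_pow, Ideal.span_singleton_le_iff_mem, pow_mul]
        rw [show ((p : absIntClosure R) ^ m) ^ (k + 1) =
          ((p : absIntClosure R) ^ m) ^ k * (p : absIntClosure R) ^ m from pow_succ _ _]
        exact Ideal.mul_mem_mul (Ideal.pow_mem_pow (hJI hpmJ) k) hpmJ
      · show Ideal.map (algebraMap (absIntClosure R) (absIntClosureCompletion R p))
            (I ^ (k + 1)) ≤
          Ideal.map (algebraMap (absIntClosure R) (absIntClosureCompletion R p)) (I ^ k * J)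
        rw [Ideal.map_mul, Ideal.map_pow, Ideal.map_pow]
        exact hyp.le
    · calc I ^ k * J ≤ I ^ k * I := Ideal.mul_mono_right hJI
        _ = I ^ (k + 1) := (pow_succ I k).symm
  refine ⟨part1, ?_⟩
  exact aux_det_trick I J v₁ ((p : absIntClosure R) ^ (m * k)) k hvI hJI
    (Submodule.fg_span (Set.toFinite _))
    (by rw [pow_mul]; exact Ideal.pow_mem_pow (hJI hpmJ) k)
    (pow_ne_zero _ hpA) part1
end
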